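/- Let G be a finite group of order v and let D be a (v,k,λ,μ) partial difference set in G with λ ≠ μ. Then D^{(-1)} = D, that is, D is closed under group inversion. -/
import Mathlib

open scoped Classical Pointwise in
private lemma pds_count_symm {G : Type*} [Group G] [Fintype G] (D : Finset G) (g : G) :
    ((D ×ˢ D).filter (fun p => p.1 ≠ p.2 ∧ p.1 * p.2⁻¹ = g)).card =
    ((D ×ˢ D).filter (fun p => p.1 ≠ p.2 ∧ p.1 * p.2⁻¹ = g⁻¹)).card := by
  apply Finset.card_bij (fun p _ => (p.2, p.1))
  · rintro ⟨x, y⟩ hp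
    simp only [Finset.mem_filter, Finset.mem_product] at hp ⊢
    obtain ⟨⟨hx, hy⟩, hne, heq⟩ := hp
    refine ⟨⟨hy, hx⟩, fun h => hne h.symm, ?_⟩
    rw [← heq]; group
  · rintro ⟨x, y⟩ hp ⟨a, b⟩ hq h
    simp only [Prod.mk.injEq] at h
    exact Prod.ext h.2 h.1
  · rintro ⟨x, y⟩ hp
    refine ⟨(y, x), ?_, rfl⟩
    simp only [Finset.mem_filter, Finset.mem_product] at hp ⊢
    obtain ⟨⟨hx, hy⟩, hne, heq⟩ := hp
    refine ⟨⟨hy, hx⟩, fun h => hne h.symm, ?_⟩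
    have : (x * y⁻¹)⁻¹ = g := by rw [heq]; group
    rw [← this]; group

open scoped Classical Pointwise in
/-- A `(v,k,λ,μ)` partial difference set `D` in a finite group `G` with `λ ≠ μ` is closed
under group inversion: `D⁽⁻¹⁾ = D`. -/
theorem partialDiffSet_inv_eq_self {G : Type*} [Group G] [Fintype G]
    (v k lam mu : ℕ) (D : Finset G) (hv : Fintype.card G = v) (hk : D.card = k)
    (h1 : (1 : G) ∉ D)
    (hlam : ∀ g ∈ D,
      ((D ×ˢ D).filter (fun p => p.1 ≠ p.2 ∧ p.1 * p.2⁻¹ = g)).card = lam)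
    (hmu : ∀ g : G, g ∉ D → g ≠ 1 →
      ((D ×ˢ D).filter (fun p => p.1 ≠ p.2 ∧ p.1 * p.2⁻¹ = g)).card = mu)
    (hne : lam ≠ mu) :
    D⁻¹ = D := by
  have key : ∀ g ∈ D, g⁻¹ ∈ D := by
    intro g hg
    by_contra hginv
    have hg1 : g ≠ 1 := fun h => h1 (h ▸ hg)
    have hginv1 : g⁻¹ ≠ 1 := inv_ne_one.mpr hg1
    have := hlam g hg
    rw [pds_count_symm, hmu g⁻¹ hginv hginv1] at this
    exact hne this.symm
  ext g
  simp only [Finset.mem_inv', ]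
  constructor
  · intro h
    have := key _ h
    rwa [inv_inv] at this
  · exact key g
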